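/- Let P ⊆ ℝ² and let G, W ⊆ P be finite sets of guard and witness positions. The polytope conv(AGP(G,W)) ⊆ ℝ^G is full-dimensional if and only if every witness sees at least two guards, i.e., |V(w) ∩ G| ≥ 2 for all w ∈ W. -/

import Mathlib

/-- Points of the Euclidean plane. -/
abbrev Pt := EuclideanSpace ℝ (Fin 2)

/-- Visibility region of `p` in `P`: points `q ∈ P` such that the closed segment
from `p` to `q` lies in `P`. -/
def Vis (P : Set Pt) (p : Pt) : Set Pt := {q ∈ P | segment ℝ p q ⊆ P}

/-- Feasible binary solutions of `AGP(G,W)`: `x ∈ {0,1}^G` such that every witness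
`w ∈ W` is seen by some guard `g ∈ G ∩ V(w)` with `x g = 1`. -/
def Feasible (P : Set Pt) (G W : Finset Pt) : Set (↥G → ℝ) :=
  {x | (∀ g, x g = 0 ∨ x g = 1) ∧
    ∀ w ∈ W, ∃ g : ↥G, (g : Pt) ∈ Vis P w ∧ x g = 1}

/-- For finite `G, W ⊆ P`, the art gallery polytope
`conv(AGP(G,W)) ⊆ ℝ^G` is full-dimensional iff every witness sees at least two
guards, i.e. `|V(w) ∩ G| ≥ 2` for all `w ∈ W`. -/
theorem agp_fulldim_iff (P : Set Pt) (G W : Finset Pt) (hG : ↑G ⊆ P) (hW : ↑W ⊆ P) :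
    affineSpan ℝ (convexHull ℝ (Feasible P G W)) = ⊤ ↔
      ∀ w ∈ W, 2 ≤ (Vis P w ∩ ↑G).ncard := by
  classical
  rw [affineSpan_convexHull]
  constructor
  · intro h w hw
    by_contra hlt
    push_neg at hlt
    have hfin : (Vis P w ∩ ↑G).Finite := G.finite_toSet.subset Set.inter_subset_right
    have h1 : (Vis P w ∩ ↑G) = ∅ ∨ ∃ a, (Vis P w ∩ ↑G) = {a} :=
      (Set.ncard_le_one_iff_eq hfin).mp (Nat.lt_succ_iff.mp hlt)
    rcases h1 with h1 | ⟨a, h1⟩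
    · -- Feasible is empty, so span is ⊥ ≠ ⊤
      have hfe : Feasible P G W = ∅ := by
        ext x
        simp only [Set.mem_empty_iff_false, iff_false]
        rintro ⟨-, hx2⟩
        obtain ⟨g, hg1, hg2⟩ := hx2 w hw
        have : (g : Pt) ∈ Vis P w ∩ ↑G := ⟨hg1, g.2⟩
        rw [h1] at this
        exact this
      rw [hfe] at h
      have : ((0 : ↥G → ℝ)) ∈ (affineSpan ℝ (∅ : Set (↥G → ℝ)) : Set (↥G → ℝ)) := by
        rw [h]; trivial
      rw [AffineSubspace.span_empty] at this
      exact this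
    · -- every feasible x has x a = 1
      have haG : a ∈ G := by
        have : a ∈ Vis P w ∩ ↑G := by rw [h1]; rfl
        exact this.2
      set i : ↥G := ⟨a, haG⟩
      set A : AffineSubspace ℝ (↥G → ℝ) :=
        AffineSubspace.mk' (fun _ => (1 : ℝ)) (LinearMap.ker (LinearMap.proj i)) with hA
      have hle : Feasible P G W ⊆ (A : Set (↥G → ℝ)) := by
        rintro x ⟨-, hx2⟩
        obtain ⟨g, hg1, hg2⟩ := hx2 w hw
        have hgi : g = i := by
          have : (g : Pt) ∈ Vis P w ∩ ↑G := ⟨hg1, g.2⟩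
          rw [h1] at this
          exact Subtype.ext this
        have hxi : x i = 1 := hgi ▸ hg2
        refine AffineSubspace.vsub_right_mem_direction_iff_mem (AffineSubspace.self_mem_mk' _ _) x |>.mp ?_
        rw [AffineSubspace.direction_mk']
        simp [LinearMap.mem_ker, hxi]
      have := (affineSpan_le.mpr hle)
      rw [h] at this
      have h0 : (0 : ↥G → ℝ) ∈ A := this trivial
      have := AffineSubspace.vsub_mem_direction h0 (AffineSubspace.self_mem_mk' _ _)
      rw [AffineSubspace.direction_mk'] at this
      simp [LinearMap.mem_ker] at this
  · intro hsee
    set c : ↥G → ℝ := fun _ => 1 with hc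
    have hcf : c ∈ Feasible P G W := by
      refine ⟨fun g => Or.inr rfl, fun w hw => ?_⟩
      obtain ⟨a, ha⟩ := Set.nonempty_of_ncard_ne_zero (by have := hsee w hw; omega : (Vis P w ∩ ↑G).ncard ≠ 0)
      exact ⟨⟨a, ha.2⟩, ha.1, rfl⟩
    rw [AffineSubspace.affineSpan_eq_top_iff_vectorSpan_eq_top_of_nonempty ℝ (↥G → ℝ) (↥G → ℝ) ⟨c, hcf⟩]
    have hy : ∀ g : ↥G, Function.update c g 0 ∈ Feasible P G W := by
      intro g
      refine ⟨fun g' => by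
        rcases eq_or_ne g' g with h | h
        · subst h; simp
        · right; simp [Function.update_of_ne h, hc], fun w hw => ?_⟩
      have hfin : (Vis P w ∩ ↑G).Finite := G.finite_toSet.subset Set.inter_subset_right
      obtain ⟨b, hb, hbg⟩ := Set.exists_ne_of_one_lt_ncard (hsee w hw) (g : Pt)
      exact ⟨⟨b, hb.2⟩, hb.1, by simp [Function.update, Subtype.ext_iff, hbg, hc]⟩
    rw [eq_top_iff]
    intro x _
    rw [pi_eq_sum_univ x]
    refine Submodule.sum_mem _ fun g _ => Submodule.smul_mem _ _ ?_
    have : c -ᵥ Function.update c g 0 ∈ vectorSpan ℝ (Feasible P G W) :=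
      vsub_mem_vectorSpan ℝ hcf (hy g)
    convert this using 1
    ext g'
    rcases eq_or_ne g' g with h | h
    · subst h; simp [hc]
    · simp [Function.update_of_ne h, hc, Pi.single_eq_of_ne h, h.symm]
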